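/- arXiv:1610.08909 — 4 statements merged into one kernel-verified Lean document; each statement's English description precedes it below -/
import Mathlib

section
/- For every ρ ∈ (−1, 1), the function g_ρ : ℝ → ℝ defined by g_ρ(u) = 1 − 2·Φ(−ρu/√(1−ρ²)) − u is monotone on ℝ (i.e., either nonincreasing or nondecreasing) if and only if ρ ≤ √(π/(2+π)); moreover, when ρ ≤ √(π/(2+π)) the function g_ρ is strictly decreasing on ℝ, and when ρ ∈ (√(π/(2+π)), 1) it is neither nonincreasing nor nondecreasing. -/
open ProbabilityTheory Real Set

/-- The cumulative distribution function of the standard normal distribution `N(0,1)`. -/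
noncomputable def stdNormCDF : ℝ → ℝ := fun x => ProbabilityTheory.cdf (gaussianReal 0 1) x

open MeasureTheory

lemma pdf_cont : Continuous (gaussianPDFReal 0 1) := by
  unfold gaussianPDFReal
  fun_prop

lemma cdf_eq_int (x : ℝ) : stdNormCDF x = ∫ t in Iic x, gaussianPDFReal 0 1 t := by
  unfold stdNormCDF
  rw [cdf_eq_real, measureReal_def, gaussianReal_apply_eq_integral 0 one_ne_zero,
    ENNReal.toReal_ofReal]
  exact integral_nonneg fun t => gaussianPDFReal_nonneg 0 1 t

lemma cdf_sub (a b : ℝ) :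
    stdNormCDF b - stdNormCDF a = ∫ t in a..b, gaussianPDFReal 0 1 t := by
  rw [cdf_eq_int, cdf_eq_int]
  exact intervalIntegral.integral_Iic_sub_Iic
    ((integrable_gaussianPDFReal 0 1).integrableOn) ((integrable_gaussianPDFReal 0 1).integrableOn)

lemma pdf_le (t : ℝ) : gaussianPDFReal 0 1 t ≤ (Real.sqrt (2 * π))⁻¹ := by
  unfold gaussianPDFReal
  push_cast
  rw [mul_one]
  have h1 : rexp (-(t - 0) ^ 2 / (2 * 1)) ≤ 1 := by
    rw [Real.exp_le_one_iff]
    nlinarith [sq_nonneg (t - 0)]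
  have h2 : (0:ℝ) ≤ (√(2 * π))⁻¹ := by positivity
  calc (√(2 * π))⁻¹ * rexp (-(t - 0) ^ 2 / (2 * 1)) ≤ (√(2 * π))⁻¹ * 1 :=
        mul_le_mul_of_nonneg_left h1 h2
    _ = (√(2 * π))⁻¹ := mul_one _

lemma pdf_lt {t : ℝ} (ht : t ≠ 0) : gaussianPDFReal 0 1 t < (Real.sqrt (2 * π))⁻¹ := by
  unfold gaussianPDFReal
  push_cast
  rw [mul_one]
  have h1 : rexp (-(t - 0) ^ 2 / (2 * 1)) < 1 := by
    rw [Real.exp_lt_one_iff]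
    have ht0 : t - 0 ≠ 0 := by simpa using ht
    have : (0:ℝ) < (t - 0) ^ 2 := by positivity
    linarith
  have h2 : (0:ℝ) < (√(2 * π))⁻¹ := by positivity
  calc (√(2 * π))⁻¹ * rexp (-(t - 0) ^ 2 / (2 * 1)) < (√(2 * π))⁻¹ * 1 :=
        mul_lt_mul_of_pos_left h1 h2
    _ = (√(2 * π))⁻¹ := mul_one _

lemma cdf_sub_lt {a b : ℝ} (hab : a < b) :
    stdNormCDF b - stdNormCDF a < (b - a) * (Real.sqrt (2 * π))⁻¹ := by
  rw [cdf_sub]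
  have h := intervalIntegral.integral_lt_integral_of_continuousOn_of_le_of_exists_lt
    (f := gaussianPDFReal 0 1) (g := fun _ => (Real.sqrt (2 * π))⁻¹) hab
    pdf_cont.continuousOn continuous_const.continuousOn
    (fun x _ => pdf_le x) ?_
  · calc (∫ t in a..b, gaussianPDFReal 0 1 t)
        < ∫ _ in a..b, (Real.sqrt (2 * π))⁻¹ := h
      _ = (b - a) * (Real.sqrt (2 * π))⁻¹ := by
          rw [intervalIntegral.integral_const, smul_eq_mul]
  · rcases eq_or_ne a 0 with rfl | ha
    · exact ⟨b, ⟨hab.le, le_rfl⟩, pdf_lt (by linarith : b ≠ 0)⟩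
    · exact ⟨a, ⟨le_rfl, hab.le⟩, pdf_lt ha⟩

lemma cdf_sub_ge {r : ℝ} (hr : 0 ≤ r) :
    2 * r * gaussianPDFReal 0 1 r ≤ stdNormCDF r - stdNormCDF (-r) := by
  rw [cdf_sub]
  have h := intervalIntegral.integral_mono_on (a := -r) (b := r)
    (f := fun _ => gaussianPDFReal 0 1 r) (g := gaussianPDFReal 0 1)
    (by linarith) intervalIntegrable_const
    ((integrable_gaussianPDFReal 0 1).intervalIntegrable)
    ?_
  · calc 2 * r * gaussianPDFReal 0 1 r
        = ∫ _ in (-r)..r, gaussianPDFReal 0 1 r := by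
          rw [intervalIntegral.integral_const, smul_eq_mul]; ring
      _ ≤ _ := h
  · intro t ht
    obtain ⟨h1, h2⟩ := ht
    unfold gaussianPDFReal
    push_cast
    have h3 : rexp (-(r - 0) ^ 2 / (2 * 1)) ≤ rexp (-(t - 0) ^ 2 / (2 * 1)) := by
      apply Real.exp_le_exp.2
      nlinarith
    have h2' : (0:ℝ) ≤ (√(2 * π * 1))⁻¹ := by positivity
    exact mul_le_mul_of_nonneg_left h3 h2'

lemma cdf_mono : Monotone stdNormCDF :=
  fun _ _ h => (ProbabilityTheory.cdf (gaussianReal 0 1)).mono h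

lemma cdf_nonneg' (x : ℝ) : 0 ≤ stdNormCDF x := ProbabilityTheory.cdf_nonneg _ x

lemma cdf_le_one' (x : ℝ) : stdNormCDF x ≤ 1 := ProbabilityTheory.cdf_le_one _ x

set_option maxHeartbeats 1000000 in
/-- For every `ρ ∈ (−1, 1)`, the function `g_ρ(u) = 1 − 2·Φ(−ρu/√(1−ρ²)) − u` is monotone on `ℝ`
(either nonincreasing or nondecreasing) iff `ρ ≤ √(π/(2+π))`; when `ρ ≤ √(π/(2+π))` it is
strictly decreasing, and when `ρ ∈ (√(π/(2+π)), 1)` it is neither nonincreasing nor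
nondecreasing. -/
theorem stmt_0 (ρ : ℝ) (hρ : ρ ∈ Set.Ioo (-1 : ℝ) 1)
    (g : ℝ → ℝ)
    (hg : ∀ u : ℝ, g u = 1 - 2 * stdNormCDF (-ρ * u / Real.sqrt (1 - ρ ^ 2)) - u) :
    ((Antitone g ∨ Monotone g) ↔ ρ ≤ Real.sqrt (π / (2 + π))) ∧
      (ρ ≤ Real.sqrt (π / (2 + π)) → StrictAnti g) ∧
      (ρ ∈ Set.Ioo (Real.sqrt (π / (2 + π))) 1 → ¬Antitone g ∧ ¬Monotone g) := by
  obtain ⟨hρ1, hρ2⟩ := hρ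
  have hπ : (0:ℝ) < π := Real.pi_pos
  set s := Real.sqrt (1 - ρ ^ 2) with hs_def
  have hρsq : ρ ^ 2 < 1 := by nlinarith
  have hs : 0 < s := Real.sqrt_pos.2 (by linarith)
  have hssq : s ^ 2 = 1 - ρ ^ 2 := Real.sq_sqrt (by linarith)
  have hsqrt2π : (0:ℝ) < Real.sqrt (2 * π) := Real.sqrt_pos.2 (by linarith)
  have h2πsq : Real.sqrt (2 * π) ^ 2 = 2 * π := Real.sq_sqrt (by linarith)
  have hθnn : 0 ≤ Real.sqrt (π / (2 + π)) := Real.sqrt_nonneg _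
  have hθsq : Real.sqrt (π / (2 + π)) ^ 2 = π / (2 + π) := Real.sq_sqrt (by positivity)
  -- Part 2: strict antitonicity when ρ ≤ √(π/(2+π))
  have part2 : ρ ≤ Real.sqrt (π / (2 + π)) → StrictAnti g := by
    intro hρθ u v huv
    rw [hg u, hg v]
    rcases le_or_gt ρ 0 with hρ0 | hρ0
    · have h1 : -ρ * u ≤ -ρ * v := by nlinarith
      have harg : -ρ * u / s ≤ -ρ * v / s := by gcongr
      have h2 := cdf_mono harg
      linarith
    · have h1 : -ρ * v < -ρ * u := by nlinarith
      have hab : -ρ * v / s < -ρ * u / s := by gcongr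
      have hD := cdf_sub_lt hab
      -- key: 2 * ρ ≤ s * √(2π)
      have hρsqle : ρ ^ 2 ≤ π / (2 + π) := by
        have := Real.sqrt_le_sqrt (le_of_eq hθsq.symm)
        calc ρ ^ 2 ≤ Real.sqrt (π / (2 + π)) ^ 2 := by nlinarith
          _ = π / (2 + π) := hθsq
      have hkeysq : (2 * ρ) ^ 2 ≤ (s * Real.sqrt (2 * π)) ^ 2 := by
        have h6 : (s * Real.sqrt (2 * π)) ^ 2 = (1 - ρ ^ 2) * (2 * π) := by
          rw [mul_pow, hssq, h2πsq]
        have h7 : ρ ^ 2 * (2 + π) ≤ π :=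
          (le_div_iff₀ (by linarith : (0:ℝ) < 2 + π)).1 hρsqle
        rw [h6]
        nlinarith
      have hkey : 2 * ρ ≤ s * Real.sqrt (2 * π) := by
        have h3 := Real.sqrt_le_sqrt hkeysq
        rwa [Real.sqrt_sq (by linarith), Real.sqrt_sq (by positivity)] at h3
      have hdiff : -ρ * u / s - -ρ * v / s = ρ * (v - u) / s := by ring
      rw [hdiff] at hD
      have hfin : 2 * (ρ * (v - u) / s * (Real.sqrt (2 * π))⁻¹) ≤ v - u := by
        have hrw : 2 * (ρ * (v - u) / s * (Real.sqrt (2 * π))⁻¹) =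
            2 * ρ * (v - u) / (s * Real.sqrt (2 * π)) := by
          field_simp
        rw [hrw, div_le_iff₀ (by positivity)]
        nlinarith [mul_le_mul_of_nonneg_right hkey (by linarith : (0:ℝ) ≤ v - u)]
      linarith
  -- Part 3: neither antitone nor monotone when ρ ∈ (θ, 1)
  have part3 : ρ ∈ Set.Ioo (Real.sqrt (π / (2 + π))) 1 → ¬Antitone g ∧ ¬Monotone g := by
    rintro ⟨hρθ, -⟩
    have hρ0 : 0 < ρ := lt_of_le_of_lt hθnn hρθ
    constructor
    · -- ¬ Antitone
      intro hanti
      set k := ρ / s with hk_def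
      have hk0 : 0 < k := by positivity
      have hksq : π / 2 < k ^ 2 := by
        have hθρ : π / (2 + π) < ρ ^ 2 := by
          calc π / (2 + π) = Real.sqrt (π / (2 + π)) ^ 2 := hθsq.symm
            _ < ρ ^ 2 := by nlinarith
        rw [hk_def, div_pow, hssq, lt_div_iff₀ (by nlinarith)]
        rw [div_lt_iff₀ (by linarith : (0:ℝ) < 2 + π)] at hθρ
        nlinarith
      have hk1 : 1 < 2 * k * (Real.sqrt (2 * π))⁻¹ := by
        have h4 : Real.sqrt (2 * π) < 2 * k := by
          have h5 : Real.sqrt (2 * π) ^ 2 < (2 * k) ^ 2 := by rw [h2πsq]; nlinarith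
          nlinarith [hsqrt2π, hk0]
        rw [show 2 * k * (Real.sqrt (2 * π))⁻¹ = 2 * k / Real.sqrt (2 * π) from
          (div_eq_mul_inv _ _).symm]
        exact (one_lt_div hsqrt2π).2 h4
      -- choose u > 0 with 1 < 2 k pdf(k u)
      have hF : Continuous (fun u : ℝ => 2 * k * gaussianPDFReal 0 1 (k * u)) := by
        apply Continuous.mul continuous_const
        exact pdf_cont.comp (continuous_const.mul continuous_id)
      have hF0 : 1 < 2 * k * gaussianPDFReal 0 1 (k * 0) := by
        have : gaussianPDFReal 0 1 (k * 0) = (Real.sqrt (2 * π))⁻¹ := by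
          unfold gaussianPDFReal
          push_cast
          norm_num
        rw [this]
        exact hk1
      have hopen : IsOpen {u : ℝ | 1 < 2 * k * gaussianPDFReal 0 1 (k * u)} :=
        isOpen_lt continuous_const hF
      obtain ⟨ε, hε, hball⟩ := Metric.isOpen_iff.1 hopen 0 hF0
      set u := ε / 2 with hu_def
      have hu0 : 0 < u := by positivity
      have humem : u ∈ Metric.ball (0:ℝ) ε := by
        rw [Metric.mem_ball, Real.dist_eq]
        rw [sub_zero, abs_of_pos hu0]
        linarith
      have hu : 1 < 2 * k * gaussianPDFReal 0 1 (k * u) := hball humem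
      -- compare g(-u) and g(u)
      have hE := cdf_sub_ge (r := k * u) (by positivity)
      have hguv := hanti (show -u ≤ u by linarith)
      rw [hg u, hg (-u)] at hguv
      have harg1 : -ρ * u / s = -(k * u) := by rw [hk_def]; ring
      have harg2 : -ρ * -u / s = k * u := by rw [hk_def]; ring
      rw [harg1, harg2] at hguv
      nlinarith [mul_pos hu0 (by linarith : (0:ℝ) < 2 * k * gaussianPDFReal 0 1 (k * u) - 1)]
    · -- ¬ Monotone
      intro hmono
      have h04 := hmono (show (0:ℝ) ≤ 4 by norm_num)
      rw [hg 0, hg 4] at h04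
      have h1 := cdf_le_one' (-ρ * 0 / s)
      have h2 := cdf_nonneg' (-ρ * 4 / s)
      linarith
  refine ⟨⟨?_, fun h => Or.inl (part2 h).antitone⟩, part2, part3⟩
  intro h
  by_contra hlt
  push_neg at hlt
  obtain ⟨hA, hM⟩ := part3 ⟨hlt, hρ2⟩
  rcases h with h | h
  · exact hA h
  · exact hM h
end

section
/- For every ρ ∈ (−1, 1), the equivalence 'g_ρ(u) ≥ 0 if and only if u ≤ 0' holds for all u ∈ ℝ if and only if ρ ≤ √(π/(2+π)), where g_ρ(u) = 1 − 2·Φ(−ρu/√(1−ρ²)) − u. (Equivalently, the threshold profile {1(u₁ ≤ 0); 1(u₂ ≤ 0)} is a mutual-best-response configuration exactly when ρ ∈ (−1, √(π/(2+π))].) -/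
open ProbabilityTheory Real Set

section Aux
open MeasureTheory

noncomputable def phi (t : ℝ) : ℝ := gaussianPDFReal 0 1 t

lemma phi_eq (t : ℝ) : phi t = (Real.sqrt (2 * π))⁻¹ * Real.exp (- t ^ 2 / 2) := by
  simp [phi, gaussianPDFReal]

lemma phi_pos (t : ℝ) : 0 < phi t := gaussianPDFReal_pos 0 1 t one_ne_zero

lemma integrable_phi : Integrable phi := integrable_gaussianPDFReal 0 1

lemma cdf_eq (x : ℝ) : stdNormCDF x = ∫ t in Iic x, phi t := by
  rw [stdNormCDF, cdf_eq_real, measureReal_def, gaussianReal_apply_eq_integral 0 one_ne_zero,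
    ENNReal.toReal_ofReal]
  · rfl
  · exact integral_nonneg fun t => gaussianPDFReal_nonneg 0 1 t

lemma cdf_sub_s1 (x y : ℝ) : stdNormCDF y - stdNormCDF x = ∫ t in x..y, phi t := by
  rw [cdf_eq, cdf_eq, intervalIntegral.integral_Iic_sub_Iic integrable_phi.integrableOn
    integrable_phi.integrableOn]

lemma cdf_neg (x : ℝ) : stdNormCDF (-x) = 1 - stdNormCDF x := by
  have h1 : (∫ t : ℝ, phi t) = 1 := integral_gaussianPDFReal_eq_one 0 one_ne_zero
  have h2 : stdNormCDF (-x) = ∫ t in Ioi x, phi t := by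
    have h := integral_comp_neg_Iic (-x) phi
    rw [neg_neg] at h
    rw [cdf_eq, ← h]
    congr 1
    ext t
    rw [phi_eq, phi_eq]
    ring_nf
  rw [h2, cdf_eq, eq_sub_iff_add_eq, add_comm, ← h1,
    ← intervalIntegral.integral_Iic_add_Ioi (b := x) integrable_phi.integrableOn integrable_phi.integrableOn]

lemma continuous_phi : Continuous phi := by
  have : phi = fun t => (Real.sqrt (2 * π))⁻¹ * Real.exp (- t ^ 2 / 2) := funext phi_eq
  rw [this]; fun_prop

lemma phi_zero : phi 0 = (Real.sqrt (2 * π))⁻¹ := by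
  rw [phi_eq]; norm_num

lemma phi_le_phi {a b : ℝ} (ha : 0 ≤ a) (hab : a ≤ b) : phi b ≤ phi a := by
  rw [phi_eq, phi_eq]
  have h2 : (0:ℝ) ≤ (Real.sqrt (2 * π))⁻¹ := by positivity
  exact mul_le_mul_of_nonneg_left (Real.exp_le_exp.2 (by nlinarith)) h2

lemma phi_lt_phi {a b : ℝ} (ha : 0 ≤ a) (hab : a < b) : phi b < phi a := by
  rw [phi_eq, phi_eq]
  have h2 : (0:ℝ) < (Real.sqrt (2 * π))⁻¹ := by positivity
  exact mul_lt_mul_of_pos_left (Real.exp_lt_exp.2 (by nlinarith)) h2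

lemma cdf_zero : stdNormCDF 0 = 1 / 2 := by
  have := cdf_neg 0
  rw [neg_zero] at this
  linarith

lemma cdf_upper {x : ℝ} (hx : 0 < x) : stdNormCDF x - 1 / 2 < x * phi 0 := by
  have h := cdf_sub_s1 0 x
  rw [cdf_zero] at h
  rw [h]
  have : ∫ t in (0:ℝ)..x, phi 0 = x * phi 0 := by
    rw [intervalIntegral.integral_const, smul_eq_mul]; ring
  rw [← this]
  exact intervalIntegral.integral_lt_integral_of_continuousOn_of_le_of_exists_lt hx
    continuous_phi.continuousOn continuous_const.continuousOn
    (fun t ht => (phi_le_phi le_rfl ht.1.le))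
    ⟨x, ⟨hx.le, le_rfl⟩, phi_lt_phi le_rfl hx⟩

lemma cdf_lower {x : ℝ} (hx : 0 < x) : x * phi x ≤ stdNormCDF x - 1 / 2 := by
  have h := cdf_sub_s1 0 x
  rw [cdf_zero] at h
  rw [h]
  have : ∫ t in (0:ℝ)..x, phi x = x * phi x := by
    rw [intervalIntegral.integral_const, smul_eq_mul]; ring
  rw [← this]
  refine intervalIntegral.integral_mono_on hx.le ?_ ?_ (fun t ht => phi_le_phi ht.1 ht.2)
  · exact intervalIntegrable_const
  · exact integrable_phi.intervalIntegrable

lemma sqrt_two_pi : Real.sqrt (2 * π) = 2 * Real.sqrt (π / 2) := by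
  rw [show (2:ℝ) * π = 2^2 * (π / 2) by ring, Real.sqrt_mul (by positivity),
    Real.sqrt_sq (by norm_num)]

lemma G_neg_of_pos {c u : ℝ} (hc : c ≤ Real.sqrt (π / 2)) (hu : 0 < u) :
    2 * stdNormCDF (c * u) - 1 - u < 0 := by
  rcases le_or_gt c 0 with h | h
  · have h1 : c * u ≤ 0 := mul_nonpos_of_nonpos_of_nonneg h hu.le
    have h2 : stdNormCDF (c * u) ≤ 1 / 2 := by
      have := cdf_mono h1
      rwa [cdf_zero] at this
    linarith
  · have hx : 0 < c * u := mul_pos h hu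
    have h2 := cdf_upper hx
    rw [phi_zero] at h2
    have h3 : 0 < Real.sqrt (2 * π) := by positivity
    have h4 : 2 * c ≤ Real.sqrt (2 * π) := by rw [sqrt_two_pi]; linarith
    have hinv : Real.sqrt (2 * π) * (Real.sqrt (2 * π))⁻¹ = 1 := mul_inv_cancel₀ h3.ne'
    have h5 : c * u * (Real.sqrt (2 * π))⁻¹ ≤ u / 2 := by
      nlinarith [mul_le_mul_of_nonneg_right h4 (mul_nonneg hu.le (inv_pos.mpr h3).le)]
    linarith

lemma key (c : ℝ) :
    (∀ u : ℝ, 2 * stdNormCDF (c * u) - 1 - u ≥ 0 ↔ u ≤ 0) ↔ c ≤ Real.sqrt (π / 2) := by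
  constructor
  · intro h
    by_contra hc
    push_neg at hc
    have hcpos : 0 < c := lt_of_le_of_lt (Real.sqrt_nonneg _) hc
    have h0 : 0 < 2 * c * phi 0 - 1 := by
      rw [phi_zero]
      have h3 : 0 < Real.sqrt (2 * π) := by positivity
      have hinv : Real.sqrt (2 * π) * (Real.sqrt (2 * π))⁻¹ = 1 := mul_inv_cancel₀ h3.ne'
      have hlt : Real.sqrt (2 * π) < 2 * c := by rw [sqrt_two_pi]; linarith
      nlinarith [mul_lt_mul_of_pos_right hlt (inv_pos.mpr h3)]
    have hf : ContinuousAt (fun u => 2 * c * phi (c * u) - 1) 0 := by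
      have : Continuous (fun u : ℝ => 2 * c * phi (c * u) - 1) :=
        ((continuous_const.mul (continuous_phi.comp (continuous_const.mul continuous_id))).sub
          continuous_const)
      exact this.continuousAt
    have hev : ∀ᶠ u in nhds (0:ℝ), 0 < 2 * c * phi (c * u) - 1 := by
      refine hf.eventually_const_lt ?_
      simpa using h0
    obtain ⟨ε, hε, hε2⟩ := Metric.eventually_nhds_iff.mp hev
    set u0 := ε / 2 with hu0
    have hu0pos : 0 < u0 := by positivity
    have hd : dist u0 0 < ε := by
      rw [Real.dist_eq, sub_zero, abs_of_pos hu0pos]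
      linarith
    have hfu0 := hε2 hd
    have hlow := cdf_lower (mul_pos hcpos hu0pos)
    have hG : 2 * stdNormCDF (c * u0) - 1 - u0 ≥ 0 := by nlinarith
    have := (h u0).mp hG
    linarith
  · intro hc u
    rcases lt_trichotomy u 0 with h | h | h
    · constructor
      · intro _; exact h.le
      · intro _
        have hneg := G_neg_of_pos hc (neg_pos.mpr h)
        have hsym : stdNormCDF (c * u) = 1 - stdNormCDF (c * -u) := by
          rw [show c * u = -(c * -u) by ring, cdf_neg]
        rw [hsym]; linarith
    · subst h; simp [cdf_zero]
    · constructor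
      · intro hG
        have := G_neg_of_pos hc h
        linarith
      · intro hle; linarith

lemma alg (ρ : ℝ) (hρ : ρ ∈ Set.Ioo (-1 : ℝ) 1) :
    ρ / Real.sqrt (1 - ρ ^ 2) ≤ Real.sqrt (π / 2) ↔ ρ ≤ Real.sqrt (π / (2 + π)) := by
  obtain ⟨ha, hb⟩ := hρ
  have h1 : 0 < 1 - ρ ^ 2 := by nlinarith
  have hs : 0 < Real.sqrt (1 - ρ ^ 2) := Real.sqrt_pos.mpr h1
  have hs2 : Real.sqrt (1 - ρ ^ 2) ^ 2 = 1 - ρ ^ 2 := Real.sq_sqrt h1.le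
  rcases le_or_gt ρ 0 with h | h
  · constructor
    · intro _; exact h.trans (Real.sqrt_nonneg _)
    · intro _; exact (div_nonpos_of_nonpos_of_nonneg h hs.le).trans (Real.sqrt_nonneg _)
  · have hds : 0 < ρ / Real.sqrt (1 - ρ ^ 2) := div_pos h hs
    rw [Real.le_sqrt' hds, Real.le_sqrt' h, div_pow, hs2, div_le_div_iff₀ h1 two_pos,
      le_div_iff₀ (by positivity : (0:ℝ) < 2 + π)]
    constructor <;> intro <;> nlinarith [pi_pos]

end Aux

/-- For every `ρ ∈ (−1, 1)`, the equivalence `g_ρ(u) ≥ 0 ↔ u ≤ 0` holds for all `u ∈ ℝ` iff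
`ρ ≤ √(π/(2+π))`, where `g_ρ(u) = 1 − 2·Φ(−ρu/√(1−ρ²)) − u`. -/
theorem stmt_1 (ρ : ℝ) (hρ : ρ ∈ Set.Ioo (-1 : ℝ) 1) :
    (∀ u : ℝ, 1 - 2 * stdNormCDF (-ρ * u / Real.sqrt (1 - ρ ^ 2)) - u ≥ 0 ↔ u ≤ 0) ↔
      ρ ≤ Real.sqrt (π / (2 + π)) := by
  set c := ρ / Real.sqrt (1 - ρ ^ 2) with hc
  have hrw : ∀ u : ℝ, 1 - 2 * stdNormCDF (-ρ * u / Real.sqrt (1 - ρ ^ 2)) - u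
      = 2 * stdNormCDF (c * u) - 1 - u := by
    intro u
    have harg : -ρ * u / Real.sqrt (1 - ρ ^ 2) = -(c * u) := by
      rw [hc, div_mul_eq_mul_div, ← neg_div, neg_mul]
    rw [harg, cdf_neg]; ring
  simp_rw [hrw]
  rw [key]
  exact alg ρ hρ
end

section
/- Let a, b ∈ ℝⁿ with aᵢ < bᵢ for all i, and let μ be a Borel probability measure on ℝⁿ that is absolutely continuous with respect to Lebesgue measure, whose density f vanishes outside the closed box ∏ᵢ[aᵢ, bᵢ] and is continuous and strictly positive on the open box ∏ᵢ(aᵢ, bᵢ). Then for every t ∈ ℝⁿ: if μ({x ∈ ℝⁿ : xᵢ ≤ tᵢ for all i}) = 0, then there exists an index i with μ({x ∈ ℝⁿ : xᵢ ≤ tᵢ}) = 0. -/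
open MeasureTheory

/-- If `μ` is a Borel probability measure on `ℝⁿ` with density (w.r.t. Lebesgue measure) `f`
vanishing outside the closed box `∏ᵢ [aᵢ, bᵢ]` and continuous and strictly positive on the open
box `∏ᵢ (aᵢ, bᵢ)`, then a zero joint lower-orthant probability forces some marginal lower-tail
probability to be zero. -/
theorem stmt_6 (n : ℕ) (a b : Fin n → ℝ) (hab : ∀ i, a i < b i)
    (f : (Fin n → ℝ) → ℝ) (μ : Measure (Fin n → ℝ)) [IsProbabilityMeasure μ]
    (hμ : μ = volume.withDensity fun x => ENNReal.ofReal (f x))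
    (hout : ∀ x ∉ Set.univ.pi fun i => Set.Icc (a i) (b i), f x = 0)
    (hcont : ContinuousOn f (Set.univ.pi fun i => Set.Ioo (a i) (b i)))
    (hpos : ∀ x ∈ Set.univ.pi fun i => Set.Ioo (a i) (b i), 0 < f x)
    (t : Fin n → ℝ)
    (h0 : μ {x | ∀ i, x i ≤ t i} = 0) :
    ∃ i, μ {x | x i ≤ t i} = 0 := by
  by_cases H : ∀ i, a i < t i
  · -- derive a contradiction: the orthant contains a small ball of positive measure
    exfalso
    set c : Fin n → ℝ := fun i => min (t i) (b i) with hc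
    have hac : ∀ i, a i < c i := fun i => lt_min (H i) (hab i)
    set x₀ : Fin n → ℝ := fun i => (a i + c i) / 2 with hx0
    have hx₀B' : ∀ i, a i < x₀ i ∧ x₀ i < c i := by
      intro i
      constructor <;> · simp only [hx0]; linarith [hac i]
    have hx₀Box : x₀ ∈ Set.univ.pi fun i => Set.Ioo (a i) (b i) := by
      intro i _
      exact ⟨(hx₀B' i).1, lt_of_lt_of_le (hx₀B' i).2 (min_le_right _ _)⟩
    have hBoxOpen : IsOpen (Set.univ.pi fun i => Set.Ioo (a i) (b i)) :=
      isOpen_set_pi Set.finite_univ (fun i _ => isOpen_Ioo)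
    have hca : ContinuousAt f x₀ := hcont.continuousAt (hBoxOpen.mem_nhds hx₀Box)
    have hfx₀ : 0 < f x₀ := hpos _ hx₀Box
    set B' : Set (Fin n → ℝ) := Set.univ.pi fun i => Set.Ioo (a i) (c i) with hB'
    have hB'open : IsOpen B' := isOpen_set_pi Set.finite_univ (fun i _ => isOpen_Ioo)
    have hx₀B : x₀ ∈ B' := fun i _ => ⟨(hx₀B' i).1, (hx₀B' i).2⟩
    have hev : {y | f x₀ / 2 < f y} ∩ B' ∈ nhds x₀ :=
      Filter.inter_mem (hca (lt_mem_nhds (show f x₀ / 2 < f x₀ by linarith)))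
        (hB'open.mem_nhds hx₀B)
    obtain ⟨ε, hε, hball⟩ := Metric.mem_nhds_iff.mp hev
    have hsub : Metric.ball x₀ ε ⊆ {x | ∀ i, x i ≤ t i} := by
      intro x hx i
      have hxB' : x ∈ B' := (hball hx).2
      exact le_of_lt (lt_of_lt_of_le (hxB' i trivial).2 (min_le_left _ _))
    have hμball : μ (Metric.ball x₀ ε) = 0 :=
      le_antisymm (h0 ▸ measure_mono hsub) zero_le
    have hlb : ENNReal.ofReal (f x₀ / 2) * volume (Metric.ball x₀ ε)
        ≤ μ (Metric.ball x₀ ε) := by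
      rw [hμ, withDensity_apply _ measurableSet_ball]
      calc ENNReal.ofReal (f x₀ / 2) * volume (Metric.ball x₀ ε)
          = ∫⁻ _ in Metric.ball x₀ ε, ENNReal.ofReal (f x₀ / 2) := by
            rw [setLIntegral_const]
        _ ≤ ∫⁻ x in Metric.ball x₀ ε, ENNReal.ofReal (f x) := by
            apply setLIntegral_mono' measurableSet_ball
            intro x hx
            exact ENNReal.ofReal_le_ofReal (le_of_lt (hball hx).1)
    rw [hμball] at hlb
    have h1 : ENNReal.ofReal (f x₀ / 2) ≠ 0 := by
      simp only [ne_eq, ENNReal.ofReal_eq_zero, not_le]; linarith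
    have h2 : volume (Metric.ball x₀ ε) ≠ 0 := (Metric.measure_ball_pos volume x₀ hε).ne'
    exact (mul_ne_zero h1 h2) (le_antisymm hlb zero_le)
  · push_neg at H
    obtain ⟨i, hti⟩ := H
    refine ⟨i, ?_⟩
    have hSmeas : MeasurableSet {x : Fin n → ℝ | x i ≤ t i} :=
      measurableSet_le (measurable_pi_apply i) measurable_const
    rw [hμ, withDensity_apply _ hSmeas]
    -- the density vanishes a.e. on the set
    have hae : (fun x => ENNReal.ofReal (f x))
        =ᵐ[volume.restrict {x : Fin n → ℝ | x i ≤ t i}] 0 := by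
      rw [Filter.EventuallyEq, ae_iff]
      have hkey : volume.restrict {x : Fin n → ℝ | x i ≤ t i}
          {x | ¬ (fun x => ENNReal.ofReal (f x)) x = (0 : (Fin n → ℝ) → ENNReal) x}
          ≤ volume (Set.univ.pi fun j => if j = i then ({a i} : Set ℝ) else Set.univ) := by
        rw [Measure.restrict_apply' hSmeas]
        apply measure_mono
        rintro x ⟨hx1, hx2⟩
        simp only [Set.mem_setOf_eq, Pi.zero_apply, ENNReal.ofReal_eq_zero, not_le] at hx1
        have hfne : f x ≠ 0 := ne_of_gt hx1
        have hxbox : x ∈ Set.univ.pi fun j => Set.Icc (a j) (b j) := by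
          by_contra hxb
          exact hfne (hout x hxb)
        have hxi : x i = a i :=
          le_antisymm (le_trans hx2 hti) (hxbox i trivial).1
        intro j _
        by_cases hj : j = i
        · subst hj; simpa using hxi
        · simp [hj]
      have hzero : volume
          (Set.univ.pi fun j => if j = i then ({a i} : Set ℝ) else Set.univ) = 0 := by
        rw [volume_pi_pi]
        apply Finset.prod_eq_zero (Finset.mem_univ i)
        simp
      exact le_antisymm (hzero ▸ hkey) zero_le
    calc ∫⁻ x in {x : Fin n → ℝ | x i ≤ t i}, ENNReal.ofReal (f x)
        = ∫⁻ _ in {x : Fin n → ℝ | x i ≤ t i}, (0 : ENNReal) := lintegral_congr_ae hae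
      _ = 0 := lintegral_zero
end

section
/- Let (Ω, 𝓕, ℙ) be a probability space, let V : Ω → ℝ be measurable with distribution equal to the uniform distribution on [0, 1], let A ∈ 𝓕, and let φ : ℝ → [0, 1] be any Borel-measurable function such that φ ∘ V is a version of the conditional expectation E[1_A | σ(V)]. Then the nondecreasing function h : [0, 1] → [0, 1] defined by h(α) = ℙ(A ∩ {V ≤ α}) is differentiable at Lebesgue-almost every α ∈ (0, 1), with h′(α) = φ(α) for Lebesgue-almost every α ∈ (0, 1). -/
open MeasureTheory

/-- If `V` is uniform on `[0,1]`, `A` is an event, and `φ ∘ V` is a version of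
`E[1_A | σ(V)]`, then `h(α) = P(A ∩ {V ≤ α})` is differentiable at Lebesgue-a.e.
`α ∈ (0,1)` with `h′(α) = φ(α)`. -/
theorem stmt_11 {Ω : Type*} [MeasurableSpace Ω] (P : Measure Ω) [IsProbabilityMeasure P]
    (V : Ω → ℝ) (hV : Measurable V)
    (hunif : P.map V = volume.restrict (Set.Icc (0 : ℝ) 1))
    (A : Set Ω) (hA : MeasurableSet A)
    (φ : ℝ → ℝ) (hφ : Measurable φ) (hφ01 : ∀ v, φ v ∈ Set.Icc (0 : ℝ) 1)
    (hver : φ ∘ V =ᵐ[P] P[A.indicator fun _ => (1 : ℝ) | MeasurableSpace.comap V inferInstance])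
    (h : ℝ → ℝ) (hh : ∀ α : ℝ, h α = (P (A ∩ {ω | V ω ≤ α})).toReal) :
    ∀ᵐ α ∂(volume.restrict (Set.Ioo (0 : ℝ) 1)), HasDerivAt h (φ α) α := by
  set μ₀ : Measure ℝ := volume.restrict (Set.Icc (0 : ℝ) 1) with hμ₀
  have hm : MeasurableSpace.comap V inferInstance ≤ ‹MeasurableSpace Ω› := hV.comap_le
  have hind : Integrable (A.indicator fun _ => (1 : ℝ)) P :=
    (integrable_const (1 : ℝ)).indicator hA
  -- integrability of φ w.r.t. μ₀
  have hφint : Integrable φ μ₀ :=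
    (integrable_const (1 : ℝ)).mono' hφ.aestronglyMeasurable
      (Filter.Eventually.of_forall fun x => by
        rw [Real.norm_eq_abs, abs_le]
        constructor <;> [linarith [(hφ01 x).1]; exact (hφ01 x).2])
  -- key identity
  have key : ∀ s : Set ℝ, MeasurableSet s →
      (P (A ∩ V ⁻¹' s)).toReal = ∫ x in s, φ x ∂μ₀ := by
    intro s hs
    have hVs : MeasurableSet (V ⁻¹' s) := hV hs
    have h1 : ∫ x in V ⁻¹' s, A.indicator (fun _ => (1 : ℝ)) x ∂P
        = (P (A ∩ V ⁻¹' s)).toReal := by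
      rw [integral_indicator hA, setIntegral_const, smul_eq_mul, mul_one,
        measureReal_restrict_apply hA, measureReal_def]
    have h2 : ∫ x in V ⁻¹' s,
        (P[A.indicator fun _ => (1 : ℝ) | MeasurableSpace.comap V inferInstance]) x ∂P
        = ∫ x in V ⁻¹' s, A.indicator (fun _ => (1 : ℝ)) x ∂P :=
      setIntegral_condExp hm hind ⟨s, hs, rfl⟩
    have h3 : ∫ x in V ⁻¹' s, (φ ∘ V) x ∂P
        = ∫ x in V ⁻¹' s,
          (P[A.indicator fun _ => (1 : ℝ) | MeasurableSpace.comap V inferInstance]) x ∂P :=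
      setIntegral_congr_ae hVs (hver.mono fun x hx _ => hx)
    have h4 : ∫ x in s, φ x ∂(P.map V) = ∫ x in V ⁻¹' s, φ (V x) ∂P :=
      setIntegral_map hs hφ.aestronglyMeasurable hV.aemeasurable
    rw [hunif] at h4
    rw [← h1, ← h2, ← h3]
    exact h4.symm
  have hend : ∀ α : ℝ, h α = ∫ x in Set.Iic α, φ x ∂μ₀ := by
    intro α
    rw [hh]
    exact key (Set.Iic α) measurableSet_Iic
  -- the null tail
  have hnull : μ₀ (Set.Iic (-1 : ℝ)) = 0 := by
    rw [hμ₀, Measure.restrict_apply measurableSet_Iic]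
    have : Set.Iic (-1 : ℝ) ∩ Set.Icc 0 1 = ∅ := by
      ext x
      simp only [Set.mem_inter_iff, Set.mem_Iic, Set.mem_Icc, Set.mem_empty_iff_false,
        iff_false, not_and]
      intro hx h0 _
      linarith
    rw [this, measure_empty]
  -- additivity of h over Ioc
  have hsplit : ∀ a b : ℝ, a ≤ b → h b = h a + ∫ x in Set.Ioc a b, φ x ∂μ₀ := by
    intro a b hab
    rw [hend, hend, ← Set.Iic_union_Ioc_eq_Iic hab,
      setIntegral_union (Set.Iic_disjoint_Ioc le_rfl) measurableSet_Ioc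
        hφint.integrableOn hφint.integrableOn]
  -- monotonicity
  have hmono : Monotone h := by
    intro a b hab
    rw [hsplit a b hab]
    have : 0 ≤ ∫ x in Set.Ioc a b, φ x ∂μ₀ :=
      setIntegral_nonneg measurableSet_Ioc fun x _ => (hφ01 x).1
    linarith
  -- continuity
  have hrepr : h = fun α => ∫ x in (-1 : ℝ)..α, φ x ∂μ₀ := by
    funext α
    rcases le_total (-1 : ℝ) α with hle | hge
    · rw [intervalIntegral.integral_of_le hle, hsplit (-1) α hle, hend]
      have : ∫ x in Set.Iic (-1 : ℝ), φ x ∂μ₀ = 0 := by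
        rw [setIntegral_measure_zero _ hnull]
      rw [this, zero_add]
    · rw [intervalIntegral.integral_of_ge hge]
      have h0 : μ₀ (Set.Ioc α (-1 : ℝ)) = 0 :=
        measure_mono_null (fun x hx => le_trans hx.2 le_rfl) hnull
      have h1 : μ₀ (Set.Iic α) = 0 :=
        measure_mono_null (fun x hx => le_trans hx hge) hnull
      rw [hend, setIntegral_measure_zero _ h1, setIntegral_measure_zero _ h0, neg_zero]
  have hcont : Continuous h := by
    rw [hrepr]
    exact intervalIntegral.continuous_primitive (fun a b => hφint.intervalIntegrable) _
  -- Stieltjes function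
  set S : StieltjesFunction ℝ :=
    { toFun := h
      mono' := hmono
      right_continuous' := fun x => (hcont.continuousAt).continuousWithinAt } with hS
  -- the density
  set g : ℝ → ENNReal := (Set.Icc (0 : ℝ) 1).indicator (fun x => ENNReal.ofReal (φ x)) with hg
  have hgmeas : Measurable g := (hφ.ennreal_ofReal).indicator measurableSet_Icc
  have hSm : S.measure = volume.withDensity g := by
    rw [hg, withDensity_indicator measurableSet_Icc, ← hμ₀]
    refine MeasureTheory.Measure.ext_of_Ioc _ _ fun a b hab => ?_
    rw [StieltjesFunction.measure_Ioc,
      withDensity_apply _ measurableSet_Ioc]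
    have hval : S b - S a = ∫ x in Set.Ioc a b, φ x ∂μ₀ := by
      show h b - h a = _
      rw [hsplit a b hab.le]; ring
    rw [hval, ofReal_integral_eq_lintegral_ofReal hφint.integrableOn
      (Filter.Eventually.of_forall fun x => (hφ01 x).1)]
  have hrd : S.measure.rnDeriv volume =ᵐ[volume] g := by
    rw [hSm]
    exact Measure.rnDeriv_withDensity volume hgmeas
  have hderiv := S.ae_hasDerivAt
  filter_upwards [ae_restrict_of_ae hderiv, ae_restrict_of_ae hrd,
    ae_restrict_mem measurableSet_Ioo] with x hx1 hx2 hx3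
  rw [hx2] at hx1
  have hgx : g x = ENNReal.ofReal (φ x) := by
    rw [hg, Set.indicator_of_mem (Set.mem_Icc_of_Ioo hx3)]
  rw [hgx, ENNReal.toReal_ofReal (hφ01 x).1] at hx1
  exact hx1
end
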